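/- A uniform matroid U(r,n) with 0 < r < n has no locked subsets (i.e., uniform matroids are 0-locked). -/

import Mathlib

open Set Matroid

variable {α : Type*}

/-- The (ℕ-valued) rank of a set in a matroid: the largest cardinality of an
independent subset. -/
noncomputable def Matroid.rnk (M : Matroid α) (X : Set α) : ℕ :=
  sSup (Set.ncard '' {I | M.Indep I ∧ I ⊆ X})

/-- `C` is a circuit of `M`: a minimal dependent set. -/
def Matroid.IsCircuitSet (M : Matroid α) (C : Set α) : Prop :=
  C ⊆ M.E ∧ ¬ M.Indep C ∧ ∀ x ∈ C, M.Indep (C \ {x})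

/-- A matroid is 2-connected (connected in Oxley's sense) if it is nonempty and
every two distinct elements of the ground set lie on a common circuit. -/
def Matroid.TwoConnected (M : Matroid α) : Prop :=
  M.E.Nonempty ∧ ∀ e ∈ M.E, ∀ f ∈ M.E, e ≠ f →
    ∃ C, M.IsCircuitSet C ∧ e ∈ C ∧ f ∈ C

/-- `L` is locked in `M` if `M|L` and `M✶|(E\L)` are 2-connected and both
`r(L)` and `r✶(E\L)` are at least `2`. -/
def Matroid.Locked (M : Matroid α) (L : Set α) : Prop :=
  L ⊂ M.E ∧ (M ↾ L).TwoConnected ∧ (M✶ ↾ (M.E \ L)).TwoConnected ∧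
    2 ≤ M.rnk L ∧ 2 ≤ M✶.rnk (M.E \ L)

/-- If `rnk X ≥ 2`, there exist two distinct elements of `X` in the ground set. -/
lemma rnk_two_exists (M : Matroid α) [M.Finite] (X : Set α)
    (h : 2 ≤ M.rnk X) : ∃ e ∈ X ∩ M.E, ∃ f ∈ X ∩ M.E, e ≠ f := by
  by_contra hcon
  push_neg at hcon
  have hle : M.rnk X ≤ 1 := by
    apply csSup_le
    · exact ⟨0, ⟨∅, ⟨M.empty_indep, empty_subset X⟩, ncard_empty α⟩⟩
    rintro m ⟨I, ⟨hI, hIX⟩, rfl⟩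
    by_contra hm
    push_neg at hm
    have hIE : I ⊆ M.E := hI.subset_ground
    have hfin : I.Finite := M.ground_finite.subset hIE
    obtain ⟨a, ha, b, hb, hab⟩ := (Set.one_lt_ncard hfin).1 hm
    exact hab (hcon a ⟨hIX ha, hIE ha⟩ b ⟨hIX hb, hIE hb⟩)
  omega

/-- In a uniform matroid, any `r`-subset of the ground set is a base. -/
lemma uniform_base (M : Matroid α) [M.Finite] (r : ℕ)
    (hunif : ∀ I, M.Indep I ↔ I ⊆ M.E ∧ I.ncard ≤ r)
    (t : Set α) (ht : t ⊆ M.E) (htc : t.ncard = r) : M.IsBase t := by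
  rw [isBase_iff_maximal_indep]
  constructor
  · exact (hunif t).2 ⟨ht, htc.le⟩
  · intro I hI hti
    have h1 : I.ncard ≤ t.ncard := by rw [htc]; exact ((hunif I).1 hI).2
    have : I.Finite := M.ground_finite.subset hI.subset_ground
    exact (Set.eq_of_subset_of_ncard_le hti h1 this).symm.subset

/-- Dual independence in a uniform matroid. -/
lemma uniform_dual_indep (M : Matroid α) [M.Finite] (r n : ℕ)
    (hrn : r ≤ n) (hn : M.E.ncard = n)
    (hunif : ∀ I, M.Indep I ↔ I ⊆ M.E ∧ I.ncard ≤ r) :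
    ∀ I, M✶.Indep I ↔ I ⊆ M.E ∧ I.ncard + r ≤ n := by
  intro I
  rw [Matroid.dual_indep_iff_exists']
  constructor
  · rintro ⟨hIE, B, hB, hdisj⟩
    refine ⟨hIE, ?_⟩
    have hBE : B ⊆ M.E := hB.subset_ground
    have hBr : B.ncard = r := by
      have h1 : B.ncard ≤ r := ((hunif B).1 hB.indep).2
      rcases lt_or_eq_of_le h1 with hlt | heq
      · exfalso
        -- extend B: pick an r-subset containing B? Instead: B maximal indep but
        -- there is an element of E \ B to add since |E| = n ≥ r > |B|... need r ≤ n and |B| < r ≤ n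
        have hfinE : M.E.Finite := M.ground_finite
        have hBn : B.ncard < M.E.ncard := by omega
        have : ∃ x ∈ M.E, x ∉ B := by
          by_contra hc
          push_neg at hc
          have := Set.ncard_le_ncard (fun x hx => hc x hx) (hfinE.subset hBE)
          omega
        obtain ⟨x, hxE, hxB⟩ := this
        have hind : M.Indep (insert x B) := by
          rw [hunif]
          refine ⟨insert_subset hxE hBE, ?_⟩
          have := Set.ncard_insert_le x B
          omega
        have := (isBase_iff_maximal_indep.1 hB).2 hind (subset_insert x B)
        exact hxB (this (mem_insert x B))
      · exact heq
    have hsub : I ⊆ M.E \ B := subset_diff.2 ⟨hIE, hdisj⟩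
    have := Set.ncard_le_ncard hsub (M.ground_finite.diff (t := B))
    have hdiff : (M.E \ B).ncard = n - r := by
      rw [Set.ncard_diff hBE (M.ground_finite.subset hBE), hn, hBr]
    omega
  · rintro ⟨hIE, hcard⟩
    refine ⟨hIE, ?_⟩
    have hfinE : M.E.Finite := M.ground_finite
    have hIcard : (M.E \ I).ncard = n - I.ncard := by
      rw [Set.ncard_diff hIE (hfinE.subset hIE), hn]
    have : r ≤ (M.E \ I).ncard := by omega
    obtain ⟨t, hts, htc⟩ := Set.exists_subset_card_eq this
    refine ⟨t, uniform_base M r hunif t (hts.trans (diff_subset)) htc, ?_⟩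
    exact (subset_diff.1 hts).2.symm.mono_right (fun a h => h)

/-- A uniform matroid `U(r,n)` with `0 < r < n` has no locked subsets
(uniform matroids are 0-locked). -/
theorem uniform_no_locked (M : Matroid α) [M.Finite] (r n : ℕ)
    (hrn : 0 < r ∧ r < n) (hn : M.E.ncard = n)
    (hunif : ∀ I, M.Indep I ↔ I ⊆ M.E ∧ I.ncard ≤ r) :
    ∀ L, ¬ M.Locked L := by
  rintro L ⟨hLE, hconn, hdconn, hr2, hdr2⟩
  have hfinE : M.E.Finite := M.ground_finite
  have hLsub : L ⊆ M.E := hLE.subset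
  have hfinL : L.Finite := hfinE.subset hLsub
  -- two distinct elements in L
  obtain ⟨e, he, f, hf, hef⟩ := rnk_two_exists M L hr2
  have heL : e ∈ L := he.1
  have hfL : f ∈ L := hf.1
  obtain ⟨C, ⟨hCE, hCdep, -⟩, heC, -⟩ :=
    hconn.2 e (by simpa using heL) f (by simpa using hfL) hef
  rw [Matroid.restrict_ground_eq] at hCE
  rw [Matroid.restrict_indep_iff] at hCdep
  push_neg at hCdep
  have hCdep' : ¬ M.Indep C := fun h => (hCdep h) hCE
  rw [hunif] at hCdep'
  push_neg at hCdep'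
  have hCcard : r < C.ncard := hCdep' (hCE.trans hLsub)
  have hLcard : r + 1 ≤ L.ncard := by
    have := Set.ncard_le_ncard hCE hfinL
    omega
  -- dual side
  have hdual := uniform_dual_indep M r n (le_of_lt hrn.2) hn hunif
  obtain ⟨e', he', f', hf', hef'⟩ := rnk_two_exists M✶ (M.E \ L) hdr2
  have he'd : e' ∈ M.E \ L := he'.1
  have hf'd : f' ∈ M.E \ L := hf'.1
  obtain ⟨C', ⟨hC'E, hC'dep, -⟩, -, -⟩ :=
    hdconn.2 e' (by simpa using he'd) f' (by simpa using hf'd) hef'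
  rw [Matroid.restrict_ground_eq] at hC'E
  rw [Matroid.restrict_indep_iff] at hC'dep
  push_neg at hC'dep
  have hC'dep' : ¬ M✶.Indep C' := fun h => (hC'dep h) hC'E
  rw [hdual] at hC'dep'
  push_neg at hC'dep'
  have hC'card : n - r < C'.ncard := by
    have h := hC'dep' (hC'E.trans diff_subset)
    omega
  have hDcard : n - r + 1 ≤ (M.E \ L).ncard := by
    have := Set.ncard_le_ncard hC'E (hfinE.diff (t := L))
    omega
  have hcompl : (M.E \ L).ncard = n - L.ncard := by
    rw [Set.ncard_diff hLsub hfinL, hn]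
  omega
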